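/- Let Ĵ be a group, J a normal subgroup of Ĵ, and g ∈ Ĵ such that the map ℤ → Ĵ/J, l ↦ g^l J, is a group isomorphism (so every element of Ĵ is uniquely of the form g^l u with l ∈ ℤ and u ∈ J). Let κ : J → GL(V) be a representation of J on a complex vector space V such that the conjugate representation ^gκ, defined by ^gκ(u) = κ(g^{−1} u g), is isomorphic to κ, and fix a linear automorphism f of V with f ∘ κ(g^{−1} u g) = κ(u) ∘ f for all u ∈ J. Then the map κ̂ : Ĵ → GL(V) defined by κ̂(g^l u) = f^l ∘ κ(u) for l ∈ ℤ and u ∈ J is a well-defined group homomorphism whose restriction to J equals κ; in particular, κ extends to a representation of Ĵ. -/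

import Mathlib

/-- Let `Jhat` be a group, `J` a normal subgroup, and `g ∈ Jhat` such
that `l ↦ g ^ l • J` is a group isomorphism `ℤ ≃ Jhat ⧸ J`.  Let `κ : J → GL(V)` be a
representation on a complex vector space and `f` a linear automorphism of `V` with
`f ∘ κ (g⁻¹ u g) = κ u ∘ f` for all `u ∈ J`.  Then `κhat (g ^ l * u) := f ^ l ∘ κ u`
defines a (well-defined) group homomorphism `Jhat → GL(V)` restricting to `κ` on `J`;
in particular `κ` extends to `Jhat`. -/
theorem exists_extension_of_representation_by_intertwiner
    (Jhat : Type*) [Group Jhat] (J : Subgroup Jhat) [hN : J.Normal] (g : Jhat)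
    (hg : Function.Bijective fun l : ℤ => (QuotientGroup.mk (g ^ l) : Jhat ⧸ J))
    (V : Type*) [AddCommGroup V] [Module ℂ V]
    (κ : J →* (V ≃ₗ[ℂ] V)) (f : V ≃ₗ[ℂ] V)
    (hf : ∀ (u : Jhat) (hu : u ∈ J) (v : V),
      f (κ ⟨g⁻¹ * u * g, by simpa using hN.conj_mem u hu g⁻¹⟩ v) = κ ⟨u, hu⟩ (f v)) :
    ∃ κhat : Jhat →* (V ≃ₗ[ℂ] V),
      (∀ (u : Jhat) (hu : u ∈ J), κhat u = κ ⟨u, hu⟩) ∧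
      ∀ (l : ℤ) (u : Jhat) (hu : u ∈ J), κhat (g ^ l * u) = f ^ l * κ ⟨u, hu⟩ := by
  classical
  -- congruence lemma for κ on equal elements
  have kc : ∀ {a b : Jhat} (ha : a ∈ J) (hb : b ∈ J), a = b →
      κ ⟨a, ha⟩ = κ ⟨b, hb⟩ := by
    rintro a b ha hb rfl; rfl
  -- conjugation memberships
  have memconj : ∀ (a : Jhat), a ∈ J → ∀ l : ℤ, g ^ (-l) * a * g ^ l ∈ J := by
    intro a ha l
    simpa [zpow_neg] using hN.conj_mem a ha (g ^ (-l))
  have mem1 : ∀ (u : Jhat), u ∈ J → g⁻¹ * u * g ∈ J := by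
    intro u hu; simpa using hN.conj_mem u hu g⁻¹
  have mem1' : ∀ (u : Jhat), u ∈ J → g * u * g⁻¹ ∈ J := by
    intro u hu; simpa using hN.conj_mem u hu g
  -- intertwining, operator form
  have hf' : ∀ (u : Jhat) (hu : u ∈ J) (hu' : g⁻¹ * u * g ∈ J),
      f * κ ⟨g⁻¹ * u * g, hu'⟩ = κ ⟨u, hu⟩ * f := by
    intro u hu hu'
    ext v
    exact hf u hu v
  -- intertwining, inverse direction
  have hf'' : ∀ (u : Jhat) (hu : u ∈ J) (hu' : g * u * g⁻¹ ∈ J),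
      f⁻¹ * κ ⟨g * u * g⁻¹, hu'⟩ = κ ⟨u, hu⟩ * f⁻¹ := by
    intro u hu hu'
    have h1 := hf' (g * u * g⁻¹) hu' (by simpa using hN.conj_mem _ hu' g⁻¹)
    have h2 : f * κ ⟨u, hu⟩ = κ ⟨g * u * g⁻¹, hu'⟩ * f := by
      rw [← h1]
      congr 1
      apply kc
      group
    have := congrArg (fun z => f⁻¹ * z * f⁻¹) h2
    simpa [mul_assoc] using this.symm
  -- key conjugation lemma for all integer powers
  have key : ∀ (l : ℤ) (u : Jhat) (hu : u ∈ J) (hu' : g ^ (-l) * u * g ^ l ∈ J),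
      f ^ l * κ ⟨g ^ (-l) * u * g ^ l, hu'⟩ = κ ⟨u, hu⟩ * f ^ l := by
    intro l
    induction l using Int.induction_on with
    | zero =>
      intro u hu hu'
      rw [kc hu' hu (by group)]
      simp
    | succ n ih =>
      intro u hu hu'
      have hw : g⁻¹ * u * g ∈ J := mem1 u hu
      have heq : g ^ (-((n : ℤ) + 1)) * u * g ^ ((n : ℤ) + 1)
          = g ^ (-(n : ℤ)) * (g⁻¹ * u * g) * g ^ (n : ℤ) := by group
      have hw' : g ^ (-(n : ℤ)) * (g⁻¹ * u * g) * g ^ (n : ℤ) ∈ J := heq ▸ hu'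
      have hfp : f ^ ((n : ℤ) + 1) = f * f ^ (n : ℤ) := by
        rw [add_comm, zpow_add, zpow_one]
      rw [kc hu' hw' heq, hfp, mul_assoc, ih _ hw hw', ← mul_assoc,
        hf' u hu hw, mul_assoc]
    | pred n ih =>
      intro u hu hu'
      have hw : g * u * g⁻¹ ∈ J := mem1' u hu
      have heq : g ^ (-(-(n : ℤ) - 1)) * u * g ^ (-(n : ℤ) - 1)
          = g ^ (-(-(n : ℤ))) * (g * u * g⁻¹) * g ^ (-(n : ℤ)) := by group
      have hw' : g ^ (-(-(n : ℤ))) * (g * u * g⁻¹) * g ^ (-(n : ℤ)) ∈ J := heq ▸ hu'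
      have hfn : f ^ (-(n : ℤ) - 1) = f⁻¹ * f ^ (-(n : ℤ)) := by
        rw [sub_eq_add_neg, add_comm, zpow_add, zpow_neg_one]
      rw [kc hu' hw' heq, hfn, mul_assoc, ih _ hw hw', ← mul_assoc,
        hf'' u hu hw, mul_assoc]
  -- the equivalence ℤ ≃ Jhat ⧸ J and the "degree" function
  let e : ℤ ≃ Jhat ⧸ J := Equiv.ofBijective _ hg
  let L : Jhat → ℤ := fun x => e.symm (QuotientGroup.mk x)
  have hmk : ∀ x : Jhat, (QuotientGroup.mk (g ^ (L x)) : Jhat ⧸ J)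
      = QuotientGroup.mk x := fun x => e.apply_symm_apply (QuotientGroup.mk x)
  have hmem : ∀ x : Jhat, g ^ (-(L x)) * x ∈ J := by
    intro x
    have h := (QuotientGroup.eq (s := J)).mp (hmk x)
    rwa [← zpow_neg] at h
  have hLg : ∀ l : ℤ, L (g ^ l) = l := fun l => e.symm_apply_apply l
  have hLmul : ∀ x y : Jhat, L (x * y) = L x + L y := by
    intro x y
    apply e.injective
    show (QuotientGroup.mk (g ^ (L (x * y))) : Jhat ⧸ J) = QuotientGroup.mk (g ^ (L x + L y))
    rw [hmk (x * y), zpow_add, QuotientGroup.mk_mul, QuotientGroup.mk_mul, hmk x, hmk y]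
  have hLJ : ∀ (u : Jhat), u ∈ J → L u = 0 := by
    intro u hu
    have h1 : (QuotientGroup.mk u : Jhat ⧸ J) = QuotientGroup.mk (g ^ (0 : ℤ)) := by
      simp [(QuotientGroup.eq_one_iff u).mpr hu]
    have h2 : L u = L (g ^ (0 : ℤ)) := by
      show e.symm _ = e.symm _
      rw [h1]
    rw [h2, hLg]
  -- the candidate function
  set F : Jhat → (V ≃ₗ[ℂ] V) :=
    fun x => f ^ (L x) * κ ⟨g ^ (-(L x)) * x, hmem x⟩ with hF
  have hmul : ∀ x y : Jhat, F (x * y) = F x * F y := by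
    intro x y
    have ha' : g ^ (-(L y)) * (g ^ (-(L x)) * x) * g ^ (L y) ∈ J :=
      memconj _ (hmem x) (L y)
    have hkey := key (L y) _ (hmem x) ha'
    have hcb : (g ^ (-(L y)) * (g ^ (-(L x)) * x) * g ^ (L y)) * (g ^ (-(L y)) * y) ∈ J :=
      mul_mem ha' (hmem y)
    have hmemxy : g ^ (-(L x + L y)) * (x * y) ∈ J := by
      rw [← hLmul x y]; exact hmem (x * y)
    calc F (x * y) = f ^ (L x + L y) * κ ⟨g ^ (-(L x + L y)) * (x * y), hmemxy⟩ := by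
          show f ^ (L (x * y)) * κ ⟨g ^ (-(L (x * y))) * (x * y), hmem (x * y)⟩ = _
          rw [kc (hmem (x * y)) hmemxy (by rw [hLmul x y]), hLmul x y]
      _ = f ^ (L x + L y) *
          κ ⟨(g ^ (-(L y)) * (g ^ (-(L x)) * x) * g ^ (L y)) * (g ^ (-(L y)) * y), hcb⟩ := by
          rw [kc hmemxy hcb (by group)]
      _ = (f ^ (L x) * f ^ (L y)) *
          (κ ⟨g ^ (-(L y)) * (g ^ (-(L x)) * x) * g ^ (L y), ha'⟩ *
            κ ⟨g ^ (-(L y)) * y, hmem y⟩) := by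
          rw [← zpow_add, ← map_mul]
          rfl
      _ = f ^ (L x) * ((f ^ (L y) * κ ⟨g ^ (-(L y)) * (g ^ (-(L x)) * x) * g ^ (L y), ha'⟩) *
            κ ⟨g ^ (-(L y)) * y, hmem y⟩) := by
          simp only [mul_assoc]
      _ = F x * F y := by
          rw [hkey]
          show _ = (f ^ (L x) * κ ⟨g ^ (-(L x)) * x, hmem x⟩) *
            (f ^ (L y) * κ ⟨g ^ (-(L y)) * y, hmem y⟩)
          simp only [mul_assoc]
  refine ⟨MonoidHom.mk' F hmul, ?_, ?_⟩
  · intro u hu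
    show F u = κ ⟨u, hu⟩
    rw [hF]
    simp only [hLJ u hu, neg_zero, zpow_zero, one_mul]
  · intro l u hu
    show F (g ^ l * u) = f ^ l * κ ⟨u, hu⟩
    have hL : L (g ^ l * u) = l := by rw [hLmul, hLg, hLJ u hu, add_zero]
    rw [hF]
    simp only [hL]
    congr 1
    apply kc
    group
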